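/- In a 2-dimensional C-WMMG, if C is a minimal winning coalition which has an idle player (i.e., C ∖ B(C) ≠ ∅), then exactly one of the two inequalities q_1(C) < q_1(N∖C) and q_2(C) < q_2(N∖C) holds. -/

import Mathlib

/-- Competitive power of a coalition in a 2-dimensional C-WMMG with weights `w1, w2`. -/
def q {P : Type*} [DecidableEq P] (w1 w2 : P → ℕ) (C : Finset P) : ℕ :=
  C.sup w1 + C.sup w2

/-- A coalition is winning iff its power exceeds that of its complement. -/
def Winning {P : Type*} [Fintype P] [DecidableEq P] (w1 w2 : P → ℕ) (C : Finset P) : Prop :=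
  q w1 w2 Cᶜ < q w1 w2 C

/-- A minimal winning coalition: winning, and every proper subset is losing. -/
def MWC {P : Type*} [Fintype P] [DecidableEq P] (w1 w2 : P → ℕ) (C : Finset P) : Prop :=
  Winning w1 w2 C ∧ ∀ D ⊂ C, ¬ Winning w1 w2 D

/-- `Aset w C` is the set of members of `C` whose `w`-weight attains the maximum over `C`. -/
def Aset {P : Type*} [DecidableEq P] (w : P → ℕ) (C : Finset P) : Finset P :=
  C.filter (fun j => w j = C.sup w)

/-- `B C = A_1(C) ∪ A_2(C)`: the busy players of `C`. -/
def Bset {P : Type*} [DecidableEq P] (w1 w2 : P → ℕ) (C : Finset P) : Finset P :=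
  Aset w1 C ∪ Aset w2 C

/-- In a 2-dim C-WMMG, if a minimal winning coalition `C` has an idle player, then
exactly one of `q_1(C) < q_1(N∖C)` and `q_2(C) < q_2(N∖C)` holds. -/
theorem mwc_with_idle_player {P : Type*} [Fintype P] [DecidableEq P]
    (w1 w2 : P → ℕ) (C : Finset P) (hC : MWC w1 w2 C)
    (hidle : (C \ Bset w1 w2 C).Nonempty) :
    Xor' (C.sup w1 < Cᶜ.sup w1) (C.sup w2 < Cᶜ.sup w2) := by
  obtain ⟨hwin, hmin⟩ := hC
  obtain ⟨j, hj⟩ := hidle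
  rw [Finset.mem_sdiff] at hj
  obtain ⟨hjC, hjB⟩ := hj
  simp only [Bset, Aset, Finset.mem_union, Finset.mem_filter, not_or, not_and] at hjB
  have hj1 : w1 j ≠ C.sup w1 := hjB.1 hjC
  have hj2 : w2 j ≠ C.sup w2 := hjB.2 hjC
  have hle1 : w1 j ≤ C.sup w1 := Finset.le_sup hjC
  have hle2 : w2 j ≤ C.sup w2 := Finset.le_sup hjC
  have hDsub : C.erase j ⊂ C := Finset.erase_ssubset hjC
  have hD1 : (C.erase j).sup w1 = C.sup w1 := by
    refine le_antisymm (Finset.sup_mono (Finset.erase_subset _ _)) ?_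
    obtain ⟨a, haC, ha⟩ := Finset.exists_mem_eq_sup C ⟨j, hjC⟩ w1
    rw [ha]
    exact Finset.le_sup (Finset.mem_erase.mpr
      ⟨fun h => hj1 (by rw [h] at ha; exact ha.symm), haC⟩)
  have hD2 : (C.erase j).sup w2 = C.sup w2 := by
    refine le_antisymm (Finset.sup_mono (Finset.erase_subset _ _)) ?_
    obtain ⟨a, haC, ha⟩ := Finset.exists_mem_eq_sup C ⟨j, hjC⟩ w2
    rw [ha]
    exact Finset.le_sup (Finset.mem_erase.mpr
      ⟨fun h => hj2 (by rw [h] at ha; exact ha.symm), haC⟩)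
  have hnot : ¬ Winning w1 w2 (C.erase j) := hmin _ hDsub
  unfold Winning q at hwin hnot
  rw [Finset.compl_erase, Finset.sup_insert, Finset.sup_insert, hD1, hD2] at hnot
  have hm1 := max_choice (w1 j) (Cᶜ.sup w1)
  have hm2 := max_choice (w2 j) (Cᶜ.sup w2)
  unfold Xor'
  unfold Xor
  rcases le_total (w1 j) (Cᶜ.sup w1) with h1 | h1 <;> rcases le_total (w2 j) (Cᶜ.sup w2) with h2 | h2 <;>
    simp only [sup_of_le_left, sup_of_le_right, h1, h2] at hnot <;> clear hm1 hm2 <;> omega
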